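/- Let V be a K-vector space of odd dimension 2p+1 (p ≥ 2) with alternating form ξ = Σ_{j=1}^{p} e*_{2j-1} ∧ e*_{2j} of maximal rank 2p, and consider the Lie algebra 𝔤 = 𝔯_𝒱 spanned by H₁,...,H_{p+1}, Z₁,...,Z_p, T₁,...,T_p with H_{p+1} = E_{2p+1,2p+1}, T_p = E_{2p+1,2p}, and the other generators as in the even case, with brackets [H_j, Z_l] = 2δ_{jl}Z_l (1 ≤ j,l ≤ p), [H_j, T_l] = (δ_{jl}+δ_{j,l+1})T_l for l ≤ p−1, [H_j, T_p] = δ_{jp}T_p, [H_{p+1}, T_p] = T_p, [H_{p+1}, Z_j] = 0, [H_{p+1}, T_j] = 0 for j ≤ p−1, all other brackets zero. If g ∈ 𝔤* vanishes on the span of the H_i and satisfies τ_p·Π_{j=1}^p ζ_j ≠ 0 (where ζ_j = g(Z_j), τ_j = g(T_j)), then 𝔤(g) = ⊕_{i=1}^{p-1} K·W_i with W_i = T_i − (τ_i/2)(Z_i/ζ_i + Z_{i+1}/ζ_{i+1}), and with H = Σ_{i=1}^{p+1} H_i one has [H, W_i] = 2W_i, hence [𝔤,𝔤(g)] ∩ 𝔤(g)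 ≠ {0} and g is not stable. -/

import Mathlib

open Module LinearMap

attribute [local instance 100] LieRing.ofAssociativeRing
set_option linter.unusedSectionVars false
set_option maxHeartbeats 1600000

namespace Paper

variable (K : Type*) [Field K] [IsAlgClosed K] [CharZero K]

/-- Elementary matrix `E_{a,b}` (with `ℕ` indices; zero if out of range). -/
def Eij (N a b : ℕ) : Matrix (Fin N) (Fin N) K :=
  Matrix.of fun i k => if (i : ℕ) = a ∧ (k : ℕ) = b then 1 else 0

variable (p : ℕ)

/-- `H_j = E_{2j-1,2j-1} − E_{2j,2j}` (0-indexed). -/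
def Hgen (N j : ℕ) : Matrix (Fin N) (Fin N) K :=
  Eij K N (2 * j) (2 * j) - Eij K N (2 * j + 1) (2 * j + 1)

/-- `Z_j = 2E_{2j-1,2j}` (0-indexed). -/
def Zgen (N j : ℕ) : Matrix (Fin N) (Fin N) K :=
  (2 : K) • Eij K N (2 * j) (2 * j + 1)

/-- `T_j = E_{2j-1,2j+2} + E_{2j+1,2j}` (0-indexed). -/
def Tgen (N j : ℕ) : Matrix (Fin N) (Fin N) K :=
  Eij K N (2 * j) (2 * j + 3) + Eij K N (2 * j + 2) (2 * j + 1)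

/-- The Lie algebra `𝔤 = 𝔯_𝒱 = 𝔩 ⊕ 𝔫`, spanned by the `H_j, Z_j (j < p)` and the
`T_j (j < p−1)`, inside `𝔤𝔩(2p, K)`. -/
def rEven : Submodule K (Matrix (Fin (2 * p)) (Fin (2 * p)) K) :=
  Submodule.span K
    ({M | ∃ j < p, M = Hgen K (2 * p) j} ∪ {M | ∃ j < p, M = Zgen K (2 * p) j} ∪
      {M | ∃ j < p - 1, M = Tgen K (2 * p) j})

/-- `W_i = T_i − (τ_i/2)(Z_i/ζ_i + Z_{i+1}/ζ_{i+1})`. -/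
def Wgen (N : ℕ) (ζ τ : ℕ → K) (i : ℕ) : Matrix (Fin N) (Fin N) K :=
  Tgen K N i - (τ i / (2 * ζ i)) • Zgen K N i - (τ i / (2 * ζ (i + 1))) • Zgen K N (i + 1)

section
variable {K : Type*} [Field K] {M : Type*} [LieRing M] [LieAlgebra K M]

/-- The stabilizer, inside a subalgebra `𝔞` (given as a submodule), of the restriction
of a linear form `g`. -/
def stabIn (𝔞 : Submodule K M) (g : Module.Dual K M) : Submodule K M where
  carrier := {X | X ∈ 𝔞 ∧ ∀ Y ∈ 𝔞, g ⁅X, Y⁆ = 0}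
  add_mem' := by
    rintro a b ⟨ha, ha'⟩ ⟨hb, hb'⟩
    exact ⟨𝔞.add_mem ha hb, fun Y hY => by
      rw [add_lie, map_add, ha' Y hY, hb' Y hY, add_zero]⟩
  zero_mem' := ⟨𝔞.zero_mem, fun Y _ => by rw [zero_lie, map_zero]⟩
  smul_mem' := by
    rintro c a ⟨ha, ha'⟩
    exact ⟨𝔞.smul_mem c ha, fun Y hY => by
      rw [smul_lie, map_smul, ha' Y hY, smul_zero]⟩

end

/-- The generators `H_j` in the odd-dimensional case: `H_{p+1} = E_{2p+1,2p+1}`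
(0-indexed index `p`), the others as in the even case. -/
def Hodd (j : ℕ) : Matrix (Fin (2 * p + 1)) (Fin (2 * p + 1)) K :=
  if j = p then Eij K (2 * p + 1) (2 * p) (2 * p) else Hgen K (2 * p + 1) j

/-- The generators `T_j` in the odd-dimensional case: `T_p = E_{2p+1,2p}`
(0-indexed index `p−1`), the others as in the even case. -/
def Todd (j : ℕ) : Matrix (Fin (2 * p + 1)) (Fin (2 * p + 1)) K :=
  if j = p - 1 then Eij K (2 * p + 1) (2 * p) (2 * p - 1) else Tgen K (2 * p + 1) j

/-- The Lie algebra `𝔤 = 𝔯_𝒱` in the odd case, inside `𝔤𝔩(2p+1, K)`. -/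
def rOdd : Submodule K (Matrix (Fin (2 * p + 1)) (Fin (2 * p + 1)) K) :=
  Submodule.span K
    ({M | ∃ j < p + 1, M = Hodd K p j} ∪ {M | ∃ j < p, M = Zgen K (2 * p + 1) j} ∪
      {M | ∃ j < p, M = Todd K p j})


lemma Eij_mul {N : ℕ} (a b c d : ℕ) :
    Eij K N a b * Eij K N c d = if b = c ∧ b < N then Eij K N a d else 0 := by
  ext i k
  rw [Matrix.mul_apply]
  by_cases h : b = c ∧ b < N
  · obtain ⟨rfl, hb⟩ := h
    rw [if_pos ⟨rfl, hb⟩]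
    rw [Finset.sum_eq_single (⟨b, hb⟩ : Fin N)]
    · simp only [Eij, Matrix.of_apply]
      by_cases h1 : (i : ℕ) = a <;> by_cases h2 : (k : ℕ) = d <;> simp [h1, h2]
    · intro j _ hj
      have : (j : ℕ) ≠ b := fun hh => hj (Fin.ext hh)
      simp [Eij, this]
    · intro h; exact absurd (Finset.mem_univ _) h
  · rw [if_neg h]
    apply Finset.sum_eq_zero
    intro j _
    have hj := j.isLt
    simp only [Eij, Matrix.of_apply, Matrix.zero_apply]
    by_cases h1 : (i : ℕ) = a ∧ (j : ℕ) = b <;> by_cases h2 : (j : ℕ) = c ∧ (k : ℕ) = d <;>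
      simp [h1, h2] <;> omega

lemma lie_Eij {N : ℕ} (a b c d : ℕ) :
    ⁅Eij K N a b, Eij K N c d⁆ =
      (if b = c ∧ b < N then Eij K N a d else 0) -
        (if d = a ∧ d < N then Eij K N c b else 0) := by
  rw [Ring.lie_def, Eij_mul, Eij_mul]

def ent {N : ℕ} (X : Matrix (Fin N) (Fin N) K) (a b : ℕ) : K :=
  if h : a < N ∧ b < N then X ⟨a, h.1⟩ ⟨b, h.2⟩ else 0

lemma ent_Eij {N : ℕ} (a b x y : ℕ) :
    ent K (Eij K N a b) x y = if x = a ∧ y = b ∧ a < N ∧ b < N then 1 else 0 := by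
  unfold ent Eij
  by_cases h : x < N ∧ y < N
  · rw [dif_pos h]
    simp only [Matrix.of_apply]
    by_cases h2 : x = a ∧ y = b
    · rw [if_pos h2, if_pos ⟨h2.1, h2.2, by omega, by omega⟩]
    · rw [if_neg h2, if_neg (fun hc => h2 ⟨hc.1, hc.2.1⟩)]
  · rw [dif_neg h, if_neg (by omega)]

lemma ent_add {N : ℕ} (X Y : Matrix (Fin N) (Fin N) K) (a b : ℕ) :
    ent K (X + Y) a b = ent K X a b + ent K Y a b := by
  unfold ent; split <;> simp

lemma ent_smul {N : ℕ} (c : K) (X : Matrix (Fin N) (Fin N) K) (a b : ℕ) :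
    ent K (c • X) a b = c * ent K X a b := by
  unfold ent; split <;> simp

lemma ent_sub {N : ℕ} (X Y : Matrix (Fin N) (Fin N) K) (a b : ℕ) :
    ent K (X - Y) a b = ent K X a b - ent K Y a b := by
  unfold ent; split <;> simp

lemma ent_zero {N : ℕ} (a b : ℕ) : ent K (0 : Matrix (Fin N) (Fin N) K) a b = 0 := by
  unfold ent; split <;> simp

lemma ent_sum {N : ℕ} {ι : Type*} (s : Finset ι) (f : ι → Matrix (Fin N) (Fin N) K) (a b : ℕ) :
    ent K (∑ i ∈ s, f i) a b = ∑ i ∈ s, ent K (f i) a b := by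
  induction s using Finset.cons_induction with
  | empty => simp [ent_zero]
  | cons i s hi ih => rw [Finset.sum_cons, Finset.sum_cons, ent_add, ih]

lemma sum_lie' {ι : Type*} {N : ℕ} (s : Finset ι) (f : ι → Matrix (Fin N) (Fin N) K)
    (y : Matrix (Fin N) (Fin N) K) : ⁅∑ i ∈ s, f i, y⁆ = ∑ i ∈ s, ⁅f i, y⁆ := by
  induction s using Finset.cons_induction with
  | empty => simp
  | cons i s hi ih => rw [Finset.sum_cons, Finset.sum_cons, add_lie, ih]


variable (p : ℕ)

lemma lie_smulM {N : ℕ} (c : K) (A B : Matrix (Fin N) (Fin N) K) :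
    ⁅A, c • B⁆ = c • ⁅A, B⁆ := by
  simp only [Ring.lie_def, Matrix.mul_smul, Matrix.smul_mul, smul_sub]

lemma smul_lieM {N : ℕ} (c : K) (A B : Matrix (Fin N) (Fin N) K) :
    ⁅c • A, B⁆ = c • ⁅A, B⁆ := by
  simp only [Ring.lie_def, Matrix.mul_smul, Matrix.smul_mul, smul_sub]

lemma Todd_eq_Tgen (i : ℕ) (hi : i ≠ p - 1) : Todd K p i = Tgen K (2 * p + 1) i := if_neg hi

lemma lie_Zgen_Zgen (j l : ℕ) :
    ⁅Zgen K (2 * p + 1) j, Zgen K (2 * p + 1) l⁆ = 0 := by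
  simp only [Zgen, lie_smulM, smul_lieM, lie_Eij]
  split_ifs <;> first | (exfalso; omega) | simp

lemma lie_Todd_Zgen (j l : ℕ) (hj : j < p) (hl : l < p) :
    ⁅Todd K p j, Zgen K (2 * p + 1) l⁆ = 0 := by
  rw [Todd]
  split_ifs with h1 <;> simp only [Tgen, Zgen, add_lie, lie_smulM, lie_Eij] <;>
    (split_ifs <;> first | (exfalso; omega) | simp)

lemma lie_Zgen_Todd (j l : ℕ) (hj : j < p) (hl : l < p) :
    ⁅Zgen K (2 * p + 1) j, Todd K p l⁆ = 0 := by
  rw [← lie_skew, lie_Todd_Zgen K p l j hl hj, neg_zero]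

lemma lie_Todd_Todd (j l : ℕ) (hj : j < p) (hl : l < p) :
    ⁅Todd K p j, Todd K p l⁆ = 0 := by
  rw [Todd, Todd]
  split_ifs <;> simp only [Tgen, add_lie, lie_add, lie_Eij] <;>
    (split_ifs <;> first | (exfalso; omega) | simp)

lemma lie_Hodd_Hodd (j l : ℕ) : ⁅Hodd K p j, Hodd K p l⁆ = 0 := by
  have key : ∀ a c : ℕ, ⁅Eij K (2 * p + 1) a a, Eij K (2 * p + 1) c c⁆ = 0 := by
    intro a c
    rw [lie_Eij]
    rcases eq_or_ne a c with rfl | h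
    · split_ifs <;> simp
    · rw [if_neg (by omega), if_neg (by omega), sub_zero]
  rw [Hodd, Hodd]
  split_ifs <;> simp only [Hgen, sub_lie, lie_sub, key] <;> simp

lemma lie_Hodd_Zgen (j l : ℕ) (hj : j < p + 1) (hl : l < p) :
    ⁅Hodd K p j, Zgen K (2 * p + 1) l⁆ = if j = l then (2 : K) • Zgen K (2 * p + 1) l else 0 := by
  rcases eq_or_ne j p with rfl | hjp
  · rw [Hodd, if_pos rfl]
    simp only [Zgen, lie_smulM, lie_Eij]
    split_ifs <;> first | (exfalso; omega) | simp
  · rw [Hodd, if_neg hjp, Hgen]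
    simp only [Zgen, lie_smulM, sub_lie, lie_Eij]
    rcases eq_or_ne j l with rfl | hjl
    · split_ifs <;> first | (exfalso; omega) | module | simp
    · split_ifs <;> first | (exfalso; omega) | simp

lemma lie_Hodd_Todd (j l : ℕ) (hj : j < p + 1) (hl : l < p) (hp : 2 ≤ p) :
    ⁅Hodd K p j, Todd K p l⁆ = if j = l ∨ j = l + 1 then Todd K p l else 0 := by
  rcases eq_or_ne l (p - 1) with rfl | hl'
  · rw [Todd, if_pos rfl]
    rcases eq_or_ne j p with rfl | hjp
    · rw [Hodd, if_pos rfl, lie_Eij]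
      split_ifs <;> first | (exfalso; omega) | simp
    · rw [Hodd, if_neg hjp, Hgen]
      simp only [sub_lie, lie_Eij]
      rcases eq_or_ne j (p - 1) with rfl | hj2
      · rw [show 2 * (p - 1) + 1 = 2 * p - 1 from by omega]
        split_ifs <;> first | (exfalso; omega) | simp
      · split_ifs <;> first | (exfalso; omega) | simp
  · rw [Todd, if_neg hl']
    rcases eq_or_ne j p with rfl | hjp
    · rw [Hodd, if_pos rfl]
      simp only [Tgen, lie_add, lie_Eij]
      split_ifs <;> first | (exfalso; omega) | simp
    · rw [Hodd, if_neg hjp, Hgen]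
      simp only [Tgen, sub_lie, lie_add, lie_sub, add_lie, lie_Eij]
      rcases eq_or_ne j l with rfl | hjl
      · split_ifs <;> first | (exfalso; omega) | simp | module
      · rcases eq_or_ne j (l + 1) with rfl | hjl2
        · rw [show 2 * (l + 1) + 1 = 2 * l + 3 from by omega,
            show 2 * (l + 1) = 2 * l + 2 from by omega]
          split_ifs <;> first | (exfalso; omega) | simp | module
        · split_ifs <;> first | (exfalso; omega) | simp

lemma lie_Zgen_Hodd (j l : ℕ) (hj : j < p) (hl : l < p + 1) :
    ⁅Zgen K (2 * p + 1) j, Hodd K p l⁆ =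
      if l = j then (-(2 : K)) • Zgen K (2 * p + 1) j else 0 := by
  rw [← lie_skew, lie_Hodd_Zgen K p l j hl hj]
  split_ifs <;> simp

lemma lie_Todd_Hodd (j l : ℕ) (hj : j < p) (hl : l < p + 1) (hp : 2 ≤ p) :
    ⁅Todd K p j, Hodd K p l⁆ = if l = j ∨ l = j + 1 then -Todd K p j else 0 := by
  rw [← lie_skew, lie_Hodd_Todd K p l j hl hj hp]
  split_ifs <;> simp


def coefH (X : Matrix (Fin (2 * p + 1)) (Fin (2 * p + 1)) K) (j : ℕ) : K :=
  ent K X (2 * j) (2 * j)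

def coefZ (X : Matrix (Fin (2 * p + 1)) (Fin (2 * p + 1)) K) (j : ℕ) : K :=
  ent K X (2 * j) (2 * j + 1) / 2

def coefT (X : Matrix (Fin (2 * p + 1)) (Fin (2 * p + 1)) K) (j : ℕ) : K :=
  if j = p - 1 then ent K X (2 * p) (2 * p - 1) else ent K X (2 * j) (2 * j + 3)

lemma coefH_add (X Y) (j : ℕ) : coefH K p (X + Y) j = coefH K p X j + coefH K p Y j := by
  simp [coefH, ent_add]

lemma coefH_smul (t : K) (X) (j : ℕ) : coefH K p (t • X) j = t * coefH K p X j := by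
  simp [coefH, ent_smul]

lemma coefH_zero (j : ℕ) : coefH K p (0 : Matrix _ _ K) j = 0 := by simp [coefH, ent_zero]

lemma coefZ_add (X Y) (j : ℕ) : coefZ K p (X + Y) j = coefZ K p X j + coefZ K p Y j := by
  simp [coefZ, ent_add, add_div]

lemma coefZ_smul (t : K) (X) (j : ℕ) : coefZ K p (t • X) j = t * coefZ K p X j := by
  simp [coefZ, ent_smul, mul_div_assoc]

lemma coefZ_zero (j : ℕ) : coefZ K p (0 : Matrix _ _ K) j = 0 := by simp [coefZ, ent_zero]

lemma coefT_add (X Y) (j : ℕ) : coefT K p (X + Y) j = coefT K p X j + coefT K p Y j := by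
  unfold coefT; split <;> simp [ent_add]

lemma coefT_smul (t : K) (X) (j : ℕ) : coefT K p (t • X) j = t * coefT K p X j := by
  unfold coefT; split <;> simp [ent_smul]

lemma coefT_zero (j : ℕ) : coefT K p (0 : Matrix _ _ K) j = 0 := by
  unfold coefT; split <;> simp [ent_zero]

lemma coefT_sub (X Y) (j : ℕ) : coefT K p (X - Y) j = coefT K p X j - coefT K p Y j := by
  unfold coefT; split <;> simp [ent_sub]

lemma coefT_sum {ι : Type*} (s : Finset ι) (f : ι → Matrix (Fin (2 * p + 1)) (Fin (2 * p + 1)) K)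
    (j : ℕ) : coefT K p (∑ i ∈ s, f i) j = ∑ i ∈ s, coefT K p (f i) j := by
  unfold coefT; split <;> rw [ent_sum]

/-- Membership of generators. -/
lemma mem_rOdd_Hodd (j : ℕ) (hj : j < p + 1) : Hodd K p j ∈ rOdd K p := by
  refine Submodule.subset_span ?_
  simp only [Set.mem_union, Set.mem_setOf_eq]
  exact Or.inl (Or.inl ⟨j, hj, rfl⟩)

lemma mem_rOdd_Zgen (j : ℕ) (hj : j < p) : Zgen K (2 * p + 1) j ∈ rOdd K p := by
  refine Submodule.subset_span ?_
  simp only [Set.mem_union, Set.mem_setOf_eq]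
  exact Or.inl (Or.inr ⟨j, hj, rfl⟩)

lemma mem_rOdd_Todd (j : ℕ) (hj : j < p) : Todd K p j ∈ rOdd K p := by
  refine Submodule.subset_span ?_
  simp only [Set.mem_union, Set.mem_setOf_eq]
  exact Or.inr ⟨j, hj, rfl⟩

/-- Coefficients of the generators. -/
lemma coefH_Hodd (j l : ℕ) (hl : l < p + 1) :
    coefH K p (Hodd K p l) j = if j = l then 1 else 0 := by
  rw [Hodd]
  by_cases hlp : l = p
  · rw [if_pos hlp]
    simp only [coefH, ent_Eij]
    by_cases h : j = l
    · rw [if_pos (by omega), if_pos h]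
    · rw [if_neg (by omega), if_neg h]
  · rw [if_neg hlp]
    simp only [coefH, Hgen, ent_sub, ent_Eij]
    by_cases h : j = l
    · rw [if_pos (by omega), if_neg (by omega), if_pos h]; norm_num
    · rw [if_neg (by omega), if_neg (by omega), if_neg h]; norm_num

lemma coefZ_Hodd (j l : ℕ) (hl : l < p + 1) : coefZ K p (Hodd K p l) j = 0 := by
  rw [Hodd]
  split_ifs with h
  · simp only [coefZ, ent_Eij]; rw [if_neg (by omega)]; norm_num
  · simp only [coefZ, Hgen, ent_sub, ent_Eij]
    rw [if_neg (by omega), if_neg (by omega)]; norm_num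

lemma coefT_Hodd (j l : ℕ) (hp : 2 ≤ p) (hl : l < p + 1) : coefT K p (Hodd K p l) j = 0 := by
  unfold coefT; rw [Hodd]
  split_ifs with h1 h2 h2 <;>
    simp only [Hgen, ent_sub, ent_Eij] <;>
    (split_ifs <;> first | (exfalso; omega) | norm_num)

lemma coefH_Zgen (j l : ℕ) (hl : l < p) : coefH K p (Zgen K (2 * p + 1) l) j = 0 := by
  simp only [coefH, Zgen, ent_smul, ent_Eij]
  rw [if_neg (by omega)]; norm_num

lemma coefZ_Zgen (j l : ℕ) (hl : l < p) :
    coefZ K p (Zgen K (2 * p + 1) l) j = if j = l then 1 else 0 := by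
  simp only [coefZ, Zgen, ent_smul, ent_Eij]
  by_cases h : j = l
  · rw [if_pos (by omega), if_pos h]; norm_num
  · rw [if_neg (by omega), if_neg h]; norm_num

lemma coefT_Zgen (j l : ℕ) (hl : l < p) (hp : 2 ≤ p) :
    coefT K p (Zgen K (2 * p + 1) l) j = 0 := by
  unfold coefT
  split_ifs with h <;> simp only [Zgen, ent_smul, ent_Eij] <;>
    (rw [if_neg (by omega)]; norm_num)

lemma coefH_Todd (j l : ℕ) (hl : l < p) (hp : 2 ≤ p) : coefH K p (Todd K p l) j = 0 := by
  rw [Todd]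
  split_ifs with h
  · simp only [coefH, ent_Eij]; rw [if_neg (by omega)]
  · simp only [coefH, Tgen, ent_add, ent_Eij]
    rw [if_neg (by omega), if_neg (by omega)]; norm_num

lemma coefZ_Todd (j l : ℕ) (hl : l < p) (hp : 2 ≤ p) : coefZ K p (Todd K p l) j = 0 := by
  rw [Todd]
  split_ifs with h
  · simp only [coefZ, ent_Eij]; rw [if_neg (by omega)]; norm_num
  · simp only [coefZ, Tgen, ent_add, ent_Eij]
    rw [if_neg (by omega), if_neg (by omega)]; norm_num

lemma coefT_Todd (j l : ℕ) (hl : l < p) (hp : 2 ≤ p) :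
    coefT K p (Todd K p l) j = if j = l then 1 else 0 := by
  unfold coefT
  by_cases hl1 : l = p - 1
  · rw [Todd, if_pos hl1]
    by_cases hj1 : j = p - 1
    · rw [if_pos hj1, ent_Eij, if_pos (by omega), if_pos (by omega)]
    · rw [if_neg hj1, ent_Eij, if_neg (by omega), if_neg (by omega)]
  · rw [Todd, if_neg hl1]
    by_cases hj1 : j = p - 1
    · rw [if_pos hj1]
      simp only [Tgen, ent_add, ent_Eij]
      rw [if_neg (by omega), if_neg (by omega), if_neg (by omega : ¬(j = l))]; norm_num
    · rw [if_neg hj1]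
      simp only [Tgen, ent_add, ent_Eij]
      by_cases hjl : j = l
      · rw [if_pos (by omega), if_neg (by omega), if_pos hjl]; norm_num
      · rw [if_neg (by omega), if_neg (by omega), if_neg hjl]; norm_num

def Scomb (a b c : ℕ → K) : Matrix (Fin (2 * p + 1)) (Fin (2 * p + 1)) K :=
  (∑ j ∈ Finset.range (p + 1), a j • Hodd K p j) +
    (∑ j ∈ Finset.range p, b j • Zgen K (2 * p + 1) j) +
    (∑ j ∈ Finset.range p, c j • Todd K p j)

lemma repr_rOdd (hp : 2 ≤ p) (X : Matrix (Fin (2 * p + 1)) (Fin (2 * p + 1)) K)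
    (hX : X ∈ rOdd K p) :
    X = Scomb K p (coefH K p X) (coefZ K p X) (coefT K p X) := by
  unfold rOdd at hX
  induction hX using Submodule.span_induction with
  | mem x h =>
    simp only [Set.mem_union, Set.mem_setOf_eq] at h
    unfold Scomb
    rcases h with (⟨l, hl, rfl⟩ | ⟨l, hl, rfl⟩) | ⟨l, hl, rfl⟩
    · have h1 : ∑ j ∈ Finset.range (p + 1), coefH K p (Hodd K p l) j • Hodd K p j
          = Hodd K p l := by
        rw [Finset.sum_congr rfl (fun j hj => by
              rw [coefH_Hodd K p j l hl, ite_smul, one_smul, zero_smul]),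
          Finset.sum_ite_eq' (Finset.range (p + 1)) l, if_pos (Finset.mem_range.mpr hl)]
      have h2 : ∑ j ∈ Finset.range p, coefZ K p (Hodd K p l) j • Zgen K (2 * p + 1) j = 0 :=
        Finset.sum_eq_zero fun j _ => by rw [coefZ_Hodd K p j l hl, zero_smul]
      have h3 : ∑ j ∈ Finset.range p, coefT K p (Hodd K p l) j • Todd K p j = 0 :=
        Finset.sum_eq_zero fun j _ => by rw [coefT_Hodd K p j l hp hl, zero_smul]
      rw [h1, h2, h3, add_zero, add_zero]
    · have h1 : ∑ j ∈ Finset.range (p + 1), coefH K p (Zgen K (2 * p + 1) l) j • Hodd K p j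
          = 0 := Finset.sum_eq_zero fun j _ => by rw [coefH_Zgen K p j l hl, zero_smul]
      have h2 : ∑ j ∈ Finset.range p, coefZ K p (Zgen K (2 * p + 1) l) j • Zgen K (2 * p + 1) j
          = Zgen K (2 * p + 1) l := by
        rw [Finset.sum_congr rfl (fun j hj => by
              rw [coefZ_Zgen K p j l hl, ite_smul, one_smul, zero_smul]),
          Finset.sum_ite_eq' (Finset.range p) l, if_pos (Finset.mem_range.mpr hl)]
      have h3 : ∑ j ∈ Finset.range p, coefT K p (Zgen K (2 * p + 1) l) j • Todd K p j = 0 :=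
        Finset.sum_eq_zero fun j _ => by rw [coefT_Zgen K p j l hl hp, zero_smul]
      rw [h1, h2, h3, zero_add, add_zero]
    · have h1 : ∑ j ∈ Finset.range (p + 1), coefH K p (Todd K p l) j • Hodd K p j = 0 :=
        Finset.sum_eq_zero fun j _ => by rw [coefH_Todd K p j l hl hp, zero_smul]
      have h2 : ∑ j ∈ Finset.range p, coefZ K p (Todd K p l) j • Zgen K (2 * p + 1) j = 0 :=
        Finset.sum_eq_zero fun j _ => by rw [coefZ_Todd K p j l hl hp, zero_smul]
      have h3 : ∑ j ∈ Finset.range p, coefT K p (Todd K p l) j • Todd K p j = Todd K p l := by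
        rw [Finset.sum_congr rfl (fun j hj => by
              rw [coefT_Todd K p j l hl hp, ite_smul, one_smul, zero_smul]),
          Finset.sum_ite_eq' (Finset.range p) l, if_pos (Finset.mem_range.mpr hl)]
      rw [h1, h2, h3, zero_add, zero_add]
  | zero =>
    unfold Scomb
    simp only [coefH_zero, coefZ_zero, coefT_zero, zero_smul, Finset.sum_const_zero, add_zero]
  | add x y hx hy ihx ihy =>
    calc x + y = Scomb K p (coefH K p x) (coefZ K p x) (coefT K p x) +
        Scomb K p (coefH K p y) (coefZ K p y) (coefT K p y) := by rw [← ihx, ← ihy]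
      _ = _ := by
        unfold Scomb
        simp only [coefH_add, coefZ_add, coefT_add, add_smul, Finset.sum_add_distrib]
        abel
  | smul t x hx ihx =>
    calc t • x = t • Scomb K p (coefH K p x) (coefZ K p x) (coefT K p x) := by rw [← ihx]
      _ = _ := by
        unfold Scomb
        simp only [coefH_smul, coefZ_smul, coefT_smul, mul_smul, Finset.smul_sum, smul_add]


section
variable {K : Type*} [Field K] {M : Type*} [LieRing M] [LieAlgebra K M]

lemma mem_stabIn (𝔞 : Submodule K M) (g : Module.Dual K M) (X : M) :
    X ∈ stabIn 𝔞 g ↔ X ∈ 𝔞 ∧ ∀ Y ∈ 𝔞, g ⁅X, Y⁆ = 0 := Iff.rfl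

end

lemma Scomb_lie_Zgen (a b c : ℕ → K) (l : ℕ) (hl : l < p) (hp : 2 ≤ p) :
    ⁅Scomb K p a b c, Zgen K (2 * p + 1) l⁆ = (2 * a l) • Zgen K (2 * p + 1) l := by
  unfold Scomb
  rw [add_lie, add_lie, sum_lie' K, sum_lie' K, sum_lie' K]
  have e1 : ∑ j ∈ Finset.range (p + 1), ⁅a j • Hodd K p j, Zgen K (2 * p + 1) l⁆
      = ∑ j ∈ Finset.range (p + 1), if j = l then (2 * a j) • Zgen K (2 * p + 1) l else 0 := by
    refine Finset.sum_congr rfl fun j hj => ?_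
    rw [smul_lieM, lie_Hodd_Zgen K p j l (Finset.mem_range.mp hj) hl]
    by_cases h : j = l
    · rw [if_pos h, if_pos h]; module
    · rw [if_neg h, if_neg h, smul_zero]
  have e2 : ∑ j ∈ Finset.range p, ⁅b j • Zgen K (2 * p + 1) j, Zgen K (2 * p + 1) l⁆ = 0 :=
    Finset.sum_eq_zero fun j _ => by rw [smul_lieM, lie_Zgen_Zgen, smul_zero]
  have e3 : ∑ j ∈ Finset.range p, ⁅c j • Todd K p j, Zgen K (2 * p + 1) l⁆ = 0 :=
    Finset.sum_eq_zero fun j hj => by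
      rw [smul_lieM, lie_Todd_Zgen K p j l (Finset.mem_range.mp hj) hl, smul_zero]
  rw [e1, e2, e3, add_zero, add_zero, Finset.sum_ite_eq',
    if_pos (Finset.mem_range.mpr (by omega : l < p + 1))]

lemma Scomb_lie_Todd (a b c : ℕ → K) (l : ℕ) (hl : l < p) (hp : 2 ≤ p) :
    ⁅Scomb K p a b c, Todd K p l⁆ = (a l + a (l + 1)) • Todd K p l := by
  unfold Scomb
  rw [add_lie, add_lie, sum_lie' K, sum_lie' K, sum_lie' K]
  have e1 : ∑ j ∈ Finset.range (p + 1), ⁅a j • Hodd K p j, Todd K p l⁆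
      = ∑ j ∈ Finset.range (p + 1),
          ((if j = l then a j • Todd K p l else 0) +
            (if j = l + 1 then a j • Todd K p l else 0)) := by
    refine Finset.sum_congr rfl fun j hj => ?_
    rw [smul_lieM, lie_Hodd_Todd K p j l (Finset.mem_range.mp hj) hl hp]
    by_cases h1 : j = l
    · rw [if_pos (Or.inl h1), if_pos h1, if_neg (by omega), add_zero]
    · by_cases h2 : j = l + 1
      · rw [if_pos (Or.inr h2), if_neg h1, if_pos h2, zero_add]
      · rw [if_neg (by omega), if_neg h1, if_neg h2, smul_zero, add_zero]
  have e2 : ∑ j ∈ Finset.range p, ⁅b j • Zgen K (2 * p + 1) j, Todd K p l⁆ = 0 :=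
    Finset.sum_eq_zero fun j hj => by
      rw [smul_lieM, lie_Zgen_Todd K p j l (Finset.mem_range.mp hj) hl, smul_zero]
  have e3 : ∑ j ∈ Finset.range p, ⁅c j • Todd K p j, Todd K p l⁆ = 0 :=
    Finset.sum_eq_zero fun j hj => by
      rw [smul_lieM, lie_Todd_Todd K p j l (Finset.mem_range.mp hj) hl, smul_zero]
  rw [e1, e2, e3, add_zero, add_zero, Finset.sum_add_distrib, Finset.sum_ite_eq',
    Finset.sum_ite_eq', if_pos (Finset.mem_range.mpr (by omega)),
    if_pos (Finset.mem_range.mpr (by omega)), ← add_smul]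

lemma Scomb_lie_H0 (a b c : ℕ → K) (hp : 2 ≤ p) :
    ⁅Scomb K p a b c, Hodd K p 0⁆
      = (-(2 * b 0)) • Zgen K (2 * p + 1) 0 + (-(c 0)) • Todd K p 0 := by
  unfold Scomb
  rw [add_lie, add_lie, sum_lie' K, sum_lie' K, sum_lie' K]
  have e1 : ∑ j ∈ Finset.range (p + 1), ⁅a j • Hodd K p j, Hodd K p 0⁆ = 0 :=
    Finset.sum_eq_zero fun j _ => by rw [smul_lieM, lie_Hodd_Hodd, smul_zero]
  have e2 : ∑ j ∈ Finset.range p, ⁅b j • Zgen K (2 * p + 1) j, Hodd K p 0⁆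
      = ∑ j ∈ Finset.range p, if j = 0 then (-(2 * b j)) • Zgen K (2 * p + 1) j else 0 := by
    refine Finset.sum_congr rfl fun j hj => ?_
    rw [smul_lieM, lie_Zgen_Hodd K p j 0 (Finset.mem_range.mp hj) (by omega)]
    by_cases h : j = 0
    · rw [if_pos (by omega : (0 : ℕ) = j), if_pos h]; module
    · rw [if_neg (by omega), if_neg h, smul_zero]
  have e3 : ∑ j ∈ Finset.range p, ⁅c j • Todd K p j, Hodd K p 0⁆
      = ∑ j ∈ Finset.range p, if j = 0 then (-(c j)) • Todd K p j else 0 := by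
    refine Finset.sum_congr rfl fun j hj => ?_
    rw [smul_lieM, lie_Todd_Hodd K p j 0 (Finset.mem_range.mp hj) (by omega) hp]
    by_cases h : j = 0
    · rw [if_pos (by omega : (0 : ℕ) = j ∨ (0 : ℕ) = j + 1), if_pos h]; module
    · rw [if_neg (by omega), if_neg h, smul_zero]
  rw [e1, e2, e3, zero_add, Finset.sum_ite_eq', Finset.sum_ite_eq',
    if_pos (Finset.mem_range.mpr (by omega)), if_pos (Finset.mem_range.mpr (by omega))]

lemma Scomb_lie_Hsucc (a b c : ℕ → K) (l : ℕ) (hl : l + 1 < p) (hp : 2 ≤ p) :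
    ⁅Scomb K p a b c, Hodd K p (l + 1)⁆
      = (-(2 * b (l + 1))) • Zgen K (2 * p + 1) (l + 1)
        + ((-(c (l + 1))) • Todd K p (l + 1) + (-(c l)) • Todd K p l) := by
  unfold Scomb
  rw [add_lie, add_lie, sum_lie' K, sum_lie' K, sum_lie' K]
  have e1 : ∑ j ∈ Finset.range (p + 1), ⁅a j • Hodd K p j, Hodd K p (l + 1)⁆ = 0 :=
    Finset.sum_eq_zero fun j _ => by rw [smul_lieM, lie_Hodd_Hodd, smul_zero]
  have e2 : ∑ j ∈ Finset.range p, ⁅b j • Zgen K (2 * p + 1) j, Hodd K p (l + 1)⁆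
      = ∑ j ∈ Finset.range p, if j = l + 1 then (-(2 * b j)) • Zgen K (2 * p + 1) j else 0 := by
    refine Finset.sum_congr rfl fun j hj => ?_
    rw [smul_lieM, lie_Zgen_Hodd K p j (l + 1) (Finset.mem_range.mp hj) (by omega)]
    by_cases h : j = l + 1
    · rw [if_pos (by omega : l + 1 = j), if_pos h]; module
    · rw [if_neg (by omega), if_neg h, smul_zero]
  have e3 : ∑ j ∈ Finset.range p, ⁅c j • Todd K p j, Hodd K p (l + 1)⁆
      = ∑ j ∈ Finset.range p,
          ((if j = l + 1 then (-(c j)) • Todd K p j else 0) +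
            (if j = l then (-(c j)) • Todd K p j else 0)) := by
    refine Finset.sum_congr rfl fun j hj => ?_
    rw [smul_lieM, lie_Todd_Hodd K p j (l + 1) (Finset.mem_range.mp hj) (by omega) hp]
    by_cases h1 : j = l + 1
    · rw [if_pos (Or.inl (by omega)), if_pos h1, if_neg (by omega), add_zero]; module
    · by_cases h2 : j = l
      · rw [if_pos (Or.inr (by omega)), if_neg h1, if_pos h2, zero_add]; module
      · rw [if_neg (by omega), if_neg h1, if_neg h2, smul_zero, add_zero]
  rw [e1, e2, e3, zero_add, Finset.sum_add_distrib, Finset.sum_ite_eq', Finset.sum_ite_eq',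
    Finset.sum_ite_eq', if_pos (Finset.mem_range.mpr (by omega)),
    if_pos (Finset.mem_range.mpr (by omega)), if_pos (Finset.mem_range.mpr (by omega))]

lemma Scomb_lie_Hp (a b c : ℕ → K) (hp : 2 ≤ p) :
    ⁅Scomb K p a b c, Hodd K p p⁆ = (-(c (p - 1))) • Todd K p (p - 1) := by
  unfold Scomb
  rw [add_lie, add_lie, sum_lie' K, sum_lie' K, sum_lie' K]
  have e1 : ∑ j ∈ Finset.range (p + 1), ⁅a j • Hodd K p j, Hodd K p p⁆ = 0 :=
    Finset.sum_eq_zero fun j _ => by rw [smul_lieM, lie_Hodd_Hodd, smul_zero]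
  have e2 : ∑ j ∈ Finset.range p, ⁅b j • Zgen K (2 * p + 1) j, Hodd K p p⁆ = 0 :=
    Finset.sum_eq_zero fun j hj => by
      rw [smul_lieM, lie_Zgen_Hodd K p j p (Finset.mem_range.mp hj) (by omega),
        if_neg (by have := Finset.mem_range.mp hj; omega), smul_zero]
  have e3 : ∑ j ∈ Finset.range p, ⁅c j • Todd K p j, Hodd K p p⁆
      = ∑ j ∈ Finset.range p, if j = p - 1 then (-(c j)) • Todd K p j else 0 := by
    refine Finset.sum_congr rfl fun j hj => ?_
    have hjp := Finset.mem_range.mp hj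
    rw [smul_lieM, lie_Todd_Hodd K p j p hjp (by omega) hp]
    by_cases h : j = p - 1
    · rw [if_pos (Or.inr (by omega)), if_pos h]; module
    · rw [if_neg (by omega), if_neg h, smul_zero]
  rw [e1, e2, e3, zero_add, zero_add, Finset.sum_ite_eq',
    if_pos (Finset.mem_range.mpr (by omega))]


lemma stab_conds (hp : 2 ≤ p) (g : Module.Dual K (Matrix (Fin (2 * p + 1)) (Fin (2 * p + 1)) K))
    (ζ τ : ℕ → K)
    (hZ : ∀ j < p, g (Zgen K (2 * p + 1) j) = ζ j) (hζ : ∀ j < p, ζ j ≠ 0)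
    (hT : ∀ j < p, g (Todd K p j) = τ j) (hτ : τ (p - 1) ≠ 0)
    (X : Matrix (Fin (2 * p + 1)) (Fin (2 * p + 1)) K) (hX : X ∈ stabIn (rOdd K p) g) :
    (∀ j < p + 1, coefH K p X j = 0) ∧ coefT K p X (p - 1) = 0 ∧
      2 * coefZ K p X 0 * ζ 0 + coefT K p X 0 * τ 0 = 0 ∧
      ∀ l, l + 1 < p →
        2 * coefZ K p X (l + 1) * ζ (l + 1) + coefT K p X (l + 1) * τ (l + 1)
          + coefT K p X l * τ l = 0 := by
  obtain ⟨hmem, hbr⟩ := (mem_stabIn (rOdd K p) g X).mp hX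
  have hrep := repr_rOdd K p hp X hmem
  have two_ne : (2 : K) ≠ 0 := by norm_num
  have ha : ∀ l, l < p → coefH K p X l = 0 := by
    intro l hl
    have h0 := hbr (Zgen K (2 * p + 1) l) (mem_rOdd_Zgen K p l hl)
    rw [hrep, Scomb_lie_Zgen K p _ _ _ l hl hp, map_smul, smul_eq_mul, hZ l hl] at h0
    rcases mul_eq_zero.mp h0 with h | h
    · rcases mul_eq_zero.mp h with h' | h'
      · exact absurd h' two_ne
      · exact h'
    · exact absurd h (hζ l hl)
  have hap : coefH K p X p = 0 := by
    have h0 := hbr (Todd K p (p - 1)) (mem_rOdd_Todd K p (p - 1) (by omega))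
    rw [hrep, Scomb_lie_Todd K p _ _ _ (p - 1) (by omega) hp, map_smul, smul_eq_mul,
      hT (p - 1) (by omega), ha (p - 1) (by omega), zero_add,
      show p - 1 + 1 = p from by omega] at h0
    rcases mul_eq_zero.mp h0 with h | h
    · exact h
    · exact absurd h hτ
  have hc' : coefT K p X (p - 1) = 0 := by
    have h0 := hbr (Hodd K p p) (mem_rOdd_Hodd K p p (by omega))
    rw [hrep, Scomb_lie_Hp K p _ _ _ hp, map_smul, smul_eq_mul, hT (p - 1) (by omega)] at h0
    rcases mul_eq_zero.mp h0 with h | h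
    · exact neg_eq_zero.mp h
    · exact absurd h hτ
  refine ⟨fun j hj => ?_, hc', ?_, fun l hl => ?_⟩
  · rcases eq_or_ne j p with rfl | h
    · exact hap
    · exact ha j (by omega)
  · have h0 := hbr (Hodd K p 0) (mem_rOdd_Hodd K p 0 (by omega))
    rw [hrep, Scomb_lie_H0 K p _ _ _ hp, map_add, map_smul, map_smul, smul_eq_mul,
      smul_eq_mul, hZ 0 (by omega), hT 0 (by omega)] at h0
    linear_combination -h0
  · have h0 := hbr (Hodd K p (l + 1)) (mem_rOdd_Hodd K p (l + 1) (by omega))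
    rw [hrep, Scomb_lie_Hsucc K p _ _ _ l hl hp, map_add, map_add, map_smul, map_smul,
      map_smul, smul_eq_mul, smul_eq_mul, smul_eq_mul, hZ (l + 1) (by omega),
      hT (l + 1) (by omega), hT l (by omega)] at h0
    linear_combination -h0

lemma lie_Hodd_Wgen (ζ τ : ℕ → K) (j i : ℕ) (hj : j < p + 1) (hi : i < p - 1) (hp : 2 ≤ p) :
    ⁅Hodd K p j, Wgen K (2 * p + 1) ζ τ i⁆ =
      (if j = i ∨ j = i + 1 then Todd K p i else 0)
        - (if j = i then (τ i / (2 * ζ i)) • ((2 : K) • Zgen K (2 * p + 1) i) else 0)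
        - (if j = i + 1 then (τ i / (2 * ζ (i + 1))) • ((2 : K) • Zgen K (2 * p + 1) (i + 1))
            else 0) := by
  rw [Wgen, ← Todd_eq_Tgen K p i (by omega), lie_sub, lie_sub, lie_smulM, lie_smulM,
    lie_Hodd_Todd K p j i hj (by omega) hp, lie_Hodd_Zgen K p j i hj (by omega),
    lie_Hodd_Zgen K p j (i + 1) hj (by omega)]
  split_ifs <;> simp

lemma Wgen_mem_rOdd (ζ τ : ℕ → K) (i : ℕ) (hi : i < p - 1) (hp : 2 ≤ p) :
    Wgen K (2 * p + 1) ζ τ i ∈ rOdd K p := by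
  rw [Wgen, ← Todd_eq_Tgen K p i (by omega)]
  exact Submodule.sub_mem _
    (Submodule.sub_mem _ (mem_rOdd_Todd K p i (by omega))
      (Submodule.smul_mem _ _ (mem_rOdd_Zgen K p i (by omega))))
    (Submodule.smul_mem _ _ (mem_rOdd_Zgen K p (i + 1) (by omega)))

lemma Wgen_mem_stab (g : Module.Dual K (Matrix (Fin (2 * p + 1)) (Fin (2 * p + 1)) K))
    (ζ τ : ℕ → K)
    (hZ : ∀ j < p, g (Zgen K (2 * p + 1) j) = ζ j) (hζ : ∀ j < p, ζ j ≠ 0)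
    (hT : ∀ j < p, g (Todd K p j) = τ j)
    (i : ℕ) (hi : i < p - 1) (hp : 2 ≤ p) :
    Wgen K (2 * p + 1) ζ τ i ∈ stabIn (rOdd K p) g := by
  rw [mem_stabIn]
  refine ⟨Wgen_mem_rOdd K p ζ τ i hi hp, fun Y hY => ?_⟩
  have two_ne : (2 : K) ≠ 0 := by norm_num
  unfold rOdd at hY
  induction hY using Submodule.span_induction with
  | mem Y hYm =>
    simp only [Set.mem_union, Set.mem_setOf_eq] at hYm
    rcases hYm with (⟨l, hl, rfl⟩ | ⟨l, hl, rfl⟩) | ⟨l, hl, rfl⟩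
    · rw [← lie_skew, map_neg, neg_eq_zero, lie_Hodd_Wgen K p ζ τ l i hl hi hp,
        map_sub, map_sub]
      simp only [apply_ite g, map_zero, map_smul, smul_eq_mul]
      rw [hT i (by omega), hZ i (by omega), hZ (i + 1) (by omega)]
      by_cases h1 : l = i
      · rw [if_pos (Or.inl h1), if_pos h1, if_neg (by omega), sub_zero,
          div_mul_cancel₀ _ (mul_ne_zero two_ne (hζ i (by omega))), sub_self]
      · by_cases h2 : l = i + 1
        · rw [if_pos (Or.inr h2), if_neg h1, if_pos h2, sub_zero,
            div_mul_cancel₀ _ (mul_ne_zero two_ne (hζ (i + 1) (by omega))), sub_self]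
        · rw [if_neg (by omega), if_neg h1, if_neg h2, sub_zero, sub_zero]
    · rw [Wgen, ← Todd_eq_Tgen K p i (by omega), sub_lie, sub_lie, smul_lieM, smul_lieM,
        lie_Todd_Zgen K p i l (by omega) hl, lie_Zgen_Zgen, lie_Zgen_Zgen]
      simp
    · rw [Wgen, ← Todd_eq_Tgen K p i (by omega), sub_lie, sub_lie, smul_lieM, smul_lieM,
        lie_Todd_Todd K p i l (by omega) hl, lie_Zgen_Todd K p i l (by omega) hl,
        lie_Zgen_Todd K p (i + 1) l (by omega) hl]
      simp
  | zero => simp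
  | add y z _ _ ihy ihz => rw [lie_add, map_add, ihy, ihz, add_zero]
  | smul t y _ ihy => rw [lie_smulM, map_smul, ihy, smul_zero]

lemma coefT_Wgen (ζ τ : ℕ → K) (i l : ℕ) (hi : i < p - 1) (hl : l < p - 1) (hp : 2 ≤ p) :
    coefT K p (Wgen K (2 * p + 1) ζ τ i) l = if i = l then 1 else 0 := by
  unfold coefT Wgen
  rw [if_neg (by omega : ¬(l = p - 1))]
  simp only [Tgen, Zgen, ent_sub, ent_add, ent_smul, ent_Eij]
  by_cases h : i = l
  · rw [if_pos (by omega), if_neg (by omega), if_neg (by omega), if_neg (by omega), if_pos h]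
    norm_num
  · rw [if_neg (by omega), if_neg (by omega), if_neg (by omega), if_neg (by omega), if_neg h]
    norm_num

lemma lie_sumH_Wgen (ζ τ : ℕ → K) (i : ℕ) (hi : i < p - 1) (hp : 2 ≤ p) :
    ⁅∑ j ∈ Finset.range (p + 1), Hodd K p j, Wgen K (2 * p + 1) ζ τ i⁆
      = (2 : K) • Wgen K (2 * p + 1) ζ τ i := by
  rw [sum_lie' K,
    Finset.sum_congr rfl (fun j hj => lie_Hodd_Wgen K p ζ τ j i (Finset.mem_range.mp hj) hi hp),
    Finset.sum_sub_distrib, Finset.sum_sub_distrib]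
  have e1 : ∑ j ∈ Finset.range (p + 1), (if j = i ∨ j = i + 1 then Todd K p i else 0)
      = Todd K p i + Todd K p i := by
    rw [Finset.sum_congr rfl (fun j hj =>
        show (if j = i ∨ j = i + 1 then Todd K p i else 0)
            = (if j = i then Todd K p i else 0) + (if j = i + 1 then Todd K p i else 0) from by
          by_cases h1 : j = i
          · rw [if_pos (Or.inl h1), if_pos h1, if_neg (by omega), add_zero]
          · by_cases h2 : j = i + 1
            · rw [if_pos (Or.inr h2), if_neg h1, if_pos h2, zero_add]
            · rw [if_neg (by omega), if_neg h1, if_neg h2, add_zero]),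
      Finset.sum_add_distrib, Finset.sum_ite_eq', Finset.sum_ite_eq',
      if_pos (Finset.mem_range.mpr (by omega)), if_pos (Finset.mem_range.mpr (by omega))]
  rw [e1, Finset.sum_ite_eq', Finset.sum_ite_eq', if_pos (Finset.mem_range.mpr (by omega)),
    if_pos (Finset.mem_range.mpr (by omega)), Wgen, ← Todd_eq_Tgen K p i (by omega)]
  module

/-- odd case `dim V = 2p+1`: for `g` vanishing on the span of the `H_i`
with `τ_p · Π ζ_j ≠ 0`, the stabilizer `𝔤(g)` is spanned by the
`W_i = T_i − (τ_i/2)(Z_i/ζ_i + Z_{i+1}/ζ_{i+1})`, `[H, W_i] = 2W_i` for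
`H = Σ H_i`, hence `[𝔤,𝔤(g)] ∩ 𝔤(g) ≠ 0` and `g` is not stable. -/
theorem not_stable_odd_case (hp : 2 ≤ p)
    (g : Module.Dual K (Matrix (Fin (2 * p + 1)) (Fin (2 * p + 1)) K)) (ζ τ : ℕ → K)
    (hH : ∀ j < p + 1, g (Hodd K p j) = 0)
    (hZ : ∀ j < p, g (Zgen K (2 * p + 1) j) = ζ j) (hζ : ∀ j < p, ζ j ≠ 0)
    (hT : ∀ j < p, g (Todd K p j) = τ j) (hτ : τ (p - 1) ≠ 0) :
    stabIn (rOdd K p) g =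
        Submodule.span K {M | ∃ i < p - 1, M = Wgen K (2 * p + 1) ζ τ i} ∧
      (∀ i < p - 1,
        ⁅∑ j ∈ Finset.range (p + 1), Hodd K p j, Wgen K (2 * p + 1) ζ τ i⁆ =
          (2 : K) • Wgen K (2 * p + 1) ζ τ i) ∧
      Submodule.span K
          {M | ∃ X ∈ rOdd K p, ∃ Y ∈ stabIn (rOdd K p) g, M = ⁅X, Y⁆} ⊓
        stabIn (rOdd K p) g ≠ ⊥ := by
  have two_ne : (2 : K) ≠ 0 := by norm_num
  have hWstab : ∀ i < p - 1, Wgen K (2 * p + 1) ζ τ i ∈ stabIn (rOdd K p) g :=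
    fun i hi => Wgen_mem_stab K p g ζ τ hZ hζ hT i hi hp
  have hbrkt : ∀ i < p - 1,
      ⁅∑ j ∈ Finset.range (p + 1), Hodd K p j, Wgen K (2 * p + 1) ζ τ i⁆
        = (2 : K) • Wgen K (2 * p + 1) ζ τ i := fun i hi => lie_sumH_Wgen K p ζ τ i hi hp
  have hspan : stabIn (rOdd K p) g
      = Submodule.span K {M | ∃ i < p - 1, M = Wgen K (2 * p + 1) ζ τ i} := by
    apply le_antisymm
    · intro X hX
      set Y := ∑ i ∈ Finset.range (p - 1), coefT K p X i • Wgen K (2 * p + 1) ζ τ i with hYdef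
      have hYstab : Y ∈ stabIn (rOdd K p) g :=
        Submodule.sum_mem _ fun i hi =>
          Submodule.smul_mem _ _ (hWstab i (Finset.mem_range.mp hi))
      have hX' : X - Y ∈ stabIn (rOdd K p) g := Submodule.sub_mem _ hX hYstab
      have conds := stab_conds K p hp g ζ τ hZ hζ hT hτ (X - Y) hX'
      have hcT : ∀ l, l < p → coefT K p (X - Y) l = 0 := by
        intro l hl
        rcases eq_or_ne l (p - 1) with rfl | hl1
        · exact conds.2.1
        · have hlp : l < p - 1 := by omega
          rw [coefT_sub, hYdef, coefT_sum,
            Finset.sum_congr rfl (fun i hi => by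
              rw [coefT_smul, coefT_Wgen K p ζ τ i l (Finset.mem_range.mp hi) hlp hp,
                mul_ite, mul_one, mul_zero]),
            Finset.sum_ite_eq', if_pos (Finset.mem_range.mpr hlp), sub_self]
      have hcZ : ∀ l, l < p → coefZ K p (X - Y) l = 0 := by
        intro l hl
        rcases Nat.eq_zero_or_pos l with rfl | hl0
        · have h0 := conds.2.2.1
          rw [hcT 0 (by omega), zero_mul, add_zero] at h0
          rcases mul_eq_zero.mp h0 with h | h
          · rcases mul_eq_zero.mp h with h' | h'
            · exact absurd h' two_ne
            · exact h'
          · exact absurd h (hζ 0 (by omega))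
        · obtain ⟨l', rfl⟩ : ∃ l', l = l' + 1 := ⟨l - 1, by omega⟩
          have h0 := conds.2.2.2 l' (by omega)
          rw [hcT (l' + 1) (by omega), hcT l' (by omega), zero_mul, zero_mul, add_zero,
            add_zero] at h0
          rcases mul_eq_zero.mp h0 with h | h
          · rcases mul_eq_zero.mp h with h' | h'
            · exact absurd h' two_ne
            · exact h'
          · exact absurd h (hζ (l' + 1) (by omega))
      have hXY : X - Y = 0 := by
        rw [repr_rOdd K p hp (X - Y) ((mem_stabIn (rOdd K p) g (X - Y)).mp hX').1]
        unfold Scomb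
        rw [Finset.sum_eq_zero (fun j hj => by
            rw [conds.1 j (Finset.mem_range.mp hj), zero_smul]),
          Finset.sum_eq_zero (fun j hj => by
            rw [hcZ j (Finset.mem_range.mp hj), zero_smul]),
          Finset.sum_eq_zero (fun j hj => by
            rw [hcT j (Finset.mem_range.mp hj), zero_smul])]
        simp
      have hXeq : X = Y := by rwa [sub_eq_zero] at hXY
      rw [hXeq, hYdef]
      exact Submodule.sum_mem _ fun i hi =>
        Submodule.smul_mem _ _ (Submodule.subset_span ⟨i, Finset.mem_range.mp hi, rfl⟩)
    · rw [Submodule.span_le]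
      rintro M ⟨i, hi, rfl⟩
      exact hWstab i hi
  refine ⟨hspan, hbrkt, ?_⟩
  intro hbot
  have hW0 : Wgen K (2 * p + 1) ζ τ 0 ∈ stabIn (rOdd K p) g := hWstab 0 (by omega)
  have hmem2 : (2 : K) • Wgen K (2 * p + 1) ζ τ 0 ∈
      (Submodule.span K {M | ∃ X ∈ rOdd K p, ∃ Y ∈ stabIn (rOdd K p) g, M = ⁅X, Y⁆} ⊓
        stabIn (rOdd K p) g) := by
    refine Submodule.mem_inf.mpr ⟨?_, Submodule.smul_mem _ _ hW0⟩
    refine Submodule.subset_span ?_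
    exact ⟨∑ j ∈ Finset.range (p + 1), Hodd K p j,
      Submodule.sum_mem _ (fun j hj => mem_rOdd_Hodd K p j (Finset.mem_range.mp hj)),
      Wgen K (2 * p + 1) ζ τ 0, hW0, (hbrkt 0 (by omega)).symm⟩
  rw [hbot, Submodule.mem_bot] at hmem2
  have hW00 : Wgen K (2 * p + 1) ζ τ 0 = 0 := by
    rcases smul_eq_zero.mp hmem2 with h | h
    · exact absurd h two_ne
    · exact h
  have h1 : coefT K p (Wgen K (2 * p + 1) ζ τ 0) 0 = 1 := by
    rw [coefT_Wgen K p ζ τ 0 0 (by omega) (by omega) hp, if_pos rfl]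
  rw [hW00, coefT_zero] at h1
  exact one_ne_zero h1.symm

end Paper
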